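/- Let λ > 0 be a real number and a_1, a_2, a_3, a_4 ∈ ℝ. Every complex root of the polynomial p(s) = s⁴ + a_4 λ s³ + a_3 λ s² + a_2 λ s + a_1 λ has strictly negative real part if and only if a_1 > 0, a_2 > 0, a_3 > 0, a_4 > 0, (a_3 a_4 / a_2)·λ > 1, and ((a_3 a_4 / a_2) − (a_1 a_4² / a_2²))·λ > 1. -/

import Mathlib

open Polynomial

private lemma pair_re_neg_iff (u v : ℂ) (h1 : (u + v).im = 0) (h2 : (u * v).im = 0) :
    (u.re < 0 ∧ v.re < 0) ↔ ((u + v).re < 0 ∧ 0 < (u * v).re) := by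
  obtain ⟨a, b⟩ := u
  obtain ⟨c, d⟩ := v
  simp only [Complex.add_im, Complex.mul_im, Complex.add_re, Complex.mul_re] at *
  have hd : d = -b := by linarith
  subst hd
  constructor
  · rintro ⟨ha, hc⟩
    constructor
    · linarith
    · nlinarith [mul_pos (neg_pos.mpr ha) (neg_pos.mpr hc), sq_nonneg b]
  · rintro ⟨hs, hp⟩
    have h2' : b * (c - a) = 0 := by nlinarith
    rcases mul_eq_zero.mp h2' with hb | hca
    · subst hb
      constructor <;> nlinarith
    · have : c = a := by linarith
      subst this
      constructor <;> linarith

private lemma multiset_card_eq_four {α : Type*} {s : Multiset α} (h : Multiset.card s = 4) :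
    ∃ a b c d, s = {a, b, c, d} := by
  have h0 : s ≠ 0 := by rintro rfl; simp at h
  obtain ⟨a, ha⟩ := Multiset.exists_mem_of_ne_zero h0
  obtain ⟨t, rfl⟩ := Multiset.exists_cons_of_mem ha
  rw [Multiset.card_cons] at h
  have ht : Multiset.card t = 3 := by omega
  obtain ⟨b, c, d, rfl⟩ := Multiset.card_eq_three.mp ht
  exact ⟨a, b, c, d, rfl⟩

set_option maxHeartbeats 1000000 in
private lemma quartic_alg (lam a₁ a₂ a₃ a₄ p q r t : ℝ) (hlam : 0 < lam)
    (h4 : a₄ * lam = p + r) (h3 : a₃ * lam = q + t + p * r)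
    (h2 : a₂ * lam = p * t + q * r) (h1 : a₁ * lam = q * t) :
    (0 < p ∧ 0 < q ∧ 0 < r ∧ 0 < t) ↔
      (0 < a₁ ∧ 0 < a₂ ∧ 0 < a₃ ∧ 0 < a₄ ∧
        1 < (a₃ * a₄ / a₂) * lam ∧
        1 < ((a₃ * a₄ / a₂) - (a₁ * a₄ ^ 2 / a₂ ^ 2)) * lam) := by
  have hdiv : ∀ x : ℝ, 0 < x * lam → 0 < x * 1 := fun x hx => by nlinarith
  have idkey : (q + t + p * r) * (p + r) * (p * t + q * r) - q * t * (p + r) ^ 2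
      - (p * t + q * r) ^ 2 = p * r * ((q - t) ^ 2 + (p + r) * (p * t + q * r)) := by ring
  constructor
  · rintro ⟨hp, hq, hr, ht⟩
    have ha₁ : 0 < a₁ := by have := hdiv a₁ (by rw [h1]; positivity); linarith
    have ha₂ : 0 < a₂ := by have := hdiv a₂ (by rw [h2]; positivity); linarith
    have ha₃ : 0 < a₃ := by have := hdiv a₃ (by rw [h3]; positivity); linarith
    have ha₄ : 0 < a₄ := by have := hdiv a₄ (by rw [h4]; positivity); linarith
    have ha₂lam : 0 < a₂ * lam := by positivity
    refine ⟨ha₁, ha₂, ha₃, ha₄, ?_, ?_⟩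
    · have e : (a₃ * a₄ / a₂) * lam = (a₃ * lam) * (a₄ * lam) / (a₂ * lam) := by
        field_simp
      rw [e, one_lt_div ha₂lam, h2, h3, h4]
      nlinarith [mul_pos hp hq, mul_pos hr ht, mul_pos (mul_pos hp hp) hr,
        mul_pos (mul_pos hp hr) hr]
    · have e : ((a₃ * a₄ / a₂) - (a₁ * a₄ ^ 2 / a₂ ^ 2)) * lam
          = ((a₃ * lam) * (a₄ * lam) * (a₂ * lam) - (a₁ * lam) * (a₄ * lam) ^ 2)
            / (a₂ * lam) ^ 2 := by
        field_simp
      rw [e, one_lt_div (by positivity), h1, h2, h3, h4]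
      have hM : 0 < (q - t) ^ 2 + (p + r) * (p * t + q * r) := by
        have : 0 < (p + r) * (p * t + q * r) := by positivity
        nlinarith [sq_nonneg (q - t)]
      nlinarith [mul_pos (mul_pos hp hr) hM]
  · rintro ⟨ha₁, ha₂, ha₃, ha₄, hi1, hi2⟩
    have ha₂lam : 0 < a₂ * lam := by positivity
    have hb0 : 0 < q * t := by rw [← h1]; positivity
    have hb1 : 0 < p * t + q * r := by rw [← h2]; positivity
    have hb3 : 0 < p + r := by rw [← h4]; positivity
    have e : ((a₃ * a₄ / a₂) - (a₁ * a₄ ^ 2 / a₂ ^ 2)) * lam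
        = ((a₃ * lam) * (a₄ * lam) * (a₂ * lam) - (a₁ * lam) * (a₄ * lam) ^ 2)
          / (a₂ * lam) ^ 2 := by
      field_simp
    rw [e, one_lt_div (by positivity), h1, h2, h3, h4] at hi2
    have hM : 0 < (q - t) ^ 2 + (p + r) * (p * t + q * r) := by
      nlinarith [sq_nonneg (q - t), mul_pos hb3 hb1]
    have hprM : 0 < p * r * ((q - t) ^ 2 + (p + r) * (p * t + q * r)) := by linarith
    have hpr : 0 < p * r := by
      rcases mul_pos_iff.mp hprM with ⟨h', _⟩ | ⟨_, h'⟩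
      · exact h'
      · linarith
    have hp : 0 < p := by
      rcases mul_pos_iff.mp hpr with ⟨h', _⟩ | ⟨h', h''⟩
      · exact h'
      · linarith
    have hr : 0 < r := by
      rcases mul_pos_iff.mp hpr with ⟨_, h'⟩ | ⟨h', h''⟩
      · exact h'
      · linarith
    have hq : 0 < q := by
      rcases mul_pos_iff.mp hb0 with ⟨h', _⟩ | ⟨h', h''⟩
      · exact h'
      · nlinarith
    have ht : 0 < t := by
      rcases mul_pos_iff.mp hb0 with ⟨_, h'⟩ | ⟨h', h''⟩
      · exact h'
      · nlinarith
    exact ⟨hp, hq, hr, ht⟩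

/-- Hurwitz criterion for `p(s) = s⁴ + a₄λs³ + a₃λs² + a₂λs + a₁λ` with
`λ > 0`: every complex root has strictly negative real part iff
`a₁, a₂, a₃, a₄ > 0`, `(a₃a₄/a₂)·λ > 1`, and
`((a₃a₄/a₂) − (a₁a₄²/a₂²))·λ > 1`. -/
theorem quartic_hurwitz (lam a₁ a₂ a₃ a₄ : ℝ) (hlam : 0 < lam) :
    (∀ z ∈ ((X ^ 4 + C ((a₄ * lam : ℝ) : ℂ) * X ^ 3 + C ((a₃ * lam : ℝ) : ℂ) * X ^ 2
        + C ((a₂ * lam : ℝ) : ℂ) * X + C ((a₁ * lam : ℝ) : ℂ)) : Polynomial ℂ).roots,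
        z.re < 0) ↔
      (0 < a₁ ∧ 0 < a₂ ∧ 0 < a₃ ∧ 0 < a₄ ∧
        1 < (a₃ * a₄ / a₂) * lam ∧
        1 < ((a₃ * a₄ / a₂) - (a₁ * a₄ ^ 2 / a₂ ^ 2)) * lam) := by
  set g : Polynomial ℂ := X ^ 4 + C ((a₄ * lam : ℝ) : ℂ) * X ^ 3 + C ((a₃ * lam : ℝ) : ℂ) * X ^ 2
      + C ((a₂ * lam : ℝ) : ℂ) * X + C ((a₁ * lam : ℝ) : ℂ) with hg
  have hgmonic : g.Monic := by rw [hg]; monicity!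
  have hsplid : g.Splits := IsAlgClosed.splits g
  have hdeg : g.natDegree = 4 := by rw [hg]; compute_degree!
  have hcard : Multiset.card g.roots = 4 :=
    ((Polynomial.splits_iff_card_roots.mp hsplid).trans hdeg)
  have hmapconj : g.map (starRingEnd ℂ) = g := by
    rw [hg]
    simp [Polynomial.map_add, Polynomial.map_mul, Polynomial.map_pow, Polynomial.map_C,
      Polynomial.map_X, Complex.conj_ofReal]
  have hconj : g.roots.map (starRingEnd ℂ) = g.roots := by
    rw [← hsplid.roots_map_of_injective (starRingEnd ℂ).injective, hmapconj]
  obtain ⟨u, v, w, x, hR, huv1, huv2, hwx1, hwx2⟩ :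
      ∃ u v w x : ℂ, g.roots = {u, v, w, x} ∧ (u + v).im = 0 ∧ (u * v).im = 0
        ∧ (w + x).im = 0 ∧ (w * x).im = 0 := by
    by_cases hall : ∀ z ∈ g.roots, z.im = 0
    · obtain ⟨u, v, w, x, hR⟩ := multiset_card_eq_four hcard
      have hu := hall u (by rw [hR]; simp)
      have hv := hall v (by rw [hR]; simp)
      have hw := hall w (by rw [hR]; simp)
      have hx := hall x (by rw [hR]; simp)
      exact ⟨u, v, w, x, hR, by simp [Complex.add_im, hu, hv],
        by simp [Complex.mul_im, hu, hv], by simp [Complex.add_im, hw, hx],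
        by simp [Complex.mul_im, hw, hx]⟩
    · push_neg at hall
      obtain ⟨z, hzmem, hzim⟩ := hall
      have hzc : (starRingEnd ℂ) z ∈ g.roots := by
        rw [← hconj]; exact Multiset.mem_map_of_mem _ hzmem
      have hne : (starRingEnd ℂ) z ≠ z := by
        simpa [Complex.conj_eq_iff_im] using hzim
      have h1 : g.roots = z ::ₘ g.roots.erase z := (Multiset.cons_erase hzmem).symm
      have hzc' : (starRingEnd ℂ) z ∈ g.roots.erase z :=
        (Multiset.mem_erase_of_ne hne).mpr hzc
      set tt := (g.roots.erase z).erase ((starRingEnd ℂ) z) with httdef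
      have h2 : g.roots.erase z = (starRingEnd ℂ) z ::ₘ tt := (Multiset.cons_erase hzc').symm
      have hcons : g.roots = z ::ₘ (starRingEnd ℂ) z ::ₘ tt := by rw [h1, h2]
      have httcard : Multiset.card tt = 2 := by
        have hc := hcard; rw [hcons] at hc; simpa using hc
      obtain ⟨w, x, htt⟩ := Multiset.card_eq_two.mp httcard
      have httconj : tt.map (starRingEnd ℂ) = tt := by
        have hcc := hconj
        rw [hcons] at hcc
        simp only [Multiset.map_cons, Complex.conj_conj] at hcc
        rw [Multiset.cons_swap] at hcc
        exact (Multiset.cons_inj_right _).mp ((Multiset.cons_inj_right _).mp hcc)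
      have hmm : ({(starRingEnd ℂ) w, (starRingEnd ℂ) x} : Multiset ℂ) = {w, x} := by
        rw [htt] at httconj; simpa using httconj
      have hsum : (starRingEnd ℂ) w + (starRingEnd ℂ) x = w + x := by
        have := congrArg Multiset.sum hmm; simpa using this
      have hprod : (starRingEnd ℂ) w * (starRingEnd ℂ) x = w * x := by
        have := congrArg Multiset.prod hmm; simpa using this
      refine ⟨z, (starRingEnd ℂ) z, w, x, ?_, ?_, ?_, ?_, ?_⟩
      · rw [hcons, htt]; rfl
      · simp
      · simp [Complex.mul_conj]
      · have hc : (starRingEnd ℂ) (w + x) = w + x := by rw [map_add]; exact hsum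
        exact Complex.conj_eq_iff_im.mp hc
      · have hc : (starRingEnd ℂ) (w * x) = w * x := by rw [map_mul]; exact hprod
        exact Complex.conj_eq_iff_im.mp hc
  -- factor g
  have heq : g = (X - C u) * (X - C v) * ((X - C w) * (X - C x)) := by
    have hfac := hsplid.eq_prod_roots_of_monic hgmonic
    rw [hR] at hfac
    rw [hfac]
    simp only [Multiset.insert_eq_cons, Multiset.map_cons, Multiset.map_singleton,
      Multiset.prod_cons, Multiset.prod_singleton]
    ring
  obtain ⟨p, hp⟩ : ∃ p : ℝ, u + v = -((p : ℝ) : ℂ) :=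
    ⟨-(u + v).re, by simp [Complex.ext_iff, huv1]⟩
  obtain ⟨q, hq⟩ : ∃ q : ℝ, u * v = ((q : ℝ) : ℂ) :=
    ⟨(u * v).re, by simp [Complex.ext_iff, huv2]⟩
  obtain ⟨r, hr⟩ : ∃ r : ℝ, w + x = -((r : ℝ) : ℂ) :=
    ⟨-(w + x).re, by simp [Complex.ext_iff, hwx1]⟩
  obtain ⟨t, ht⟩ : ∃ t : ℝ, w * x = ((t : ℝ) : ℂ) :=
    ⟨(w * x).re, by simp [Complex.ext_iff, hwx2]⟩
  have hquad1 : (X - C u) * (X - C v) = X ^ 2 + C ((p : ℝ) : ℂ) * X + C ((q : ℝ) : ℂ) := by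
    have h : (X - C u) * (X - C v) = X ^ 2 - C (u + v) * X + C (u * v) := by
      simp only [C_add, C_mul]; ring
    rw [h, hp, hq, map_neg]; ring
  have hquad2 : (X - C w) * (X - C x) = X ^ 2 + C ((r : ℝ) : ℂ) * X + C ((t : ℝ) : ℂ) := by
    have h : (X - C w) * (X - C x) = X ^ 2 - C (w + x) * X + C (w * x) := by
      simp only [C_add, C_mul]; ring
    rw [h, hr, ht, map_neg]; ring
  have hgexp : g = X ^ 4 + C (((p + r : ℝ)) : ℂ) * X ^ 3 + C (((q + t + p * r : ℝ)) : ℂ) * X ^ 2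
      + C (((p * t + q * r : ℝ)) : ℂ) * X + C (((q * t : ℝ)) : ℂ) := by
    rw [heq, hquad1, hquad2]
    simp only [Complex.ofReal_add, Complex.ofReal_mul, C_add, C_mul]
    ring
  have hco := hg.symm.trans hgexp
  have e4 : a₄ * lam = p + r := by
    have hc := congrArg (fun P => Polynomial.coeff P 3) hco
    simp only [Polynomial.coeff_add, Polynomial.coeff_C_mul, Polynomial.coeff_X_pow,
      Polynomial.coeff_C, Polynomial.coeff_X] at hc
    norm_num at hc
    exact_mod_cast hc
  have e3 : a₃ * lam = q + t + p * r := by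
    have hc := congrArg (fun P => Polynomial.coeff P 2) hco
    simp only [Polynomial.coeff_add, Polynomial.coeff_C_mul, Polynomial.coeff_X_pow,
      Polynomial.coeff_C, Polynomial.coeff_X] at hc
    norm_num at hc
    exact_mod_cast hc
  have e2 : a₂ * lam = p * t + q * r := by
    have hc := congrArg (fun P => Polynomial.coeff P 1) hco
    simp only [Polynomial.coeff_add, Polynomial.coeff_C_mul, Polynomial.coeff_X_pow,
      Polynomial.coeff_C, Polynomial.coeff_X] at hc
    norm_num at hc
    exact_mod_cast hc
  have e1 : a₁ * lam = q * t := by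
    have hc := congrArg (fun P => Polynomial.coeff P 0) hco
    simp only [Polynomial.coeff_add, Polynomial.coeff_C_mul, Polynomial.coeff_X_pow,
      Polynomial.coeff_C, Polynomial.coeff_X] at hc
    norm_num at hc
    exact_mod_cast hc
  rw [hR]
  have hmem : (∀ z ∈ ({u, v, w, x} : Multiset ℂ), z.re < 0) ↔
      ((u.re < 0 ∧ v.re < 0) ∧ (w.re < 0 ∧ x.re < 0)) := by
    simp only [Multiset.insert_eq_cons, Multiset.mem_cons, Multiset.mem_singleton]
    constructor
    · intro h; exact ⟨⟨h u (by tauto), h v (by tauto)⟩, h w (by tauto), h x (by tauto)⟩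
    · rintro ⟨⟨h1, h2⟩, h3, h4⟩ z hz
      rcases hz with rfl | rfl | rfl | rfl <;> assumption
  rw [hmem, pair_re_neg_iff u v huv1 huv2, pair_re_neg_iff w x hwx1 hwx2]
  have hre1 : (u + v).re = -p := by rw [hp]; simp
  have hre2 : (u * v).re = q := by rw [hq]; simp
  have hre3 : (w + x).re = -r := by rw [hr]; simp
  have hre4 : (w * x).re = t := by rw [ht]; simp
  rw [hre1, hre2, hre3, hre4,
    ← quartic_alg lam a₁ a₂ a₃ a₄ p q r t hlam e4 e3 e2 e1]
  constructor
  · rintro ⟨⟨k1, k2⟩, k3, k4⟩; exact ⟨by linarith, k2, by linarith, k4⟩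
  · rintro ⟨k1, k2, k3, k4⟩; exact ⟨⟨by linarith, k2⟩, by linarith, k4⟩
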